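/- Let p₁, p₂ ∈ (0,1) with p₁ + p₂ = 1, and let (u(x))_{x≥1} be i.i.d. with P(u(1) = 1) = p₁, P(u(1) = 2) = p₂. Then the dual offspring numbers satisfy: P(v(1) = 1) = 1, P(v(2) = 0, v(3) = 1) = p₂, P(v(2) = 1, v(3) = 0) = p₁ p₂, and P(v(2) = 1, v(3) = 1) = p₁². In particular v(2) and v(3) are not independent, so the dual reproduction is not a rank-dependent Galton–Watson reproduction with independent offspring numbers. -/

import Mathlib

open MeasureTheory ProbabilityTheory
open scoped ENNReal

lemma natInf_eq_of_min {S : Set ℕ} {k : ℕ} (hk : k ∈ S) (h : ∀ j, j < k → j ∉ S) :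
    sInf S = k :=
  le_antisymm (Nat.sInf_le hk) (by
    by_contra hlt
    push_neg at hlt
    exact h _ hlt (Nat.sInf_mem ⟨k, hk⟩))

/-- Birth-death GW reproduction without deaths: if `P(u(1)=1) = p₁`,
`P(u(1)=2) = p₂` with `p₁ + p₂ = 1`, `p₁, p₂ ∈ (0,1)`, then
`P(v(1)=1) = 1`, `P(v(2)=0, v(3)=1) = p₂`, `P(v(2)=1, v(3)=0) = p₁p₂`,
`P(v(2)=1, v(3)=1) = p₁²`; in particular `v(2)` and `v(3)` are not independent. -/
theorem stmt_18 {Ω : Type*} [MeasurableSpace Ω] (μ : Measure Ω) [IsProbabilityMeasure μ]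
    (p₁ p₂ : ℝ≥0∞) (hp₁pos : 0 < p₁) (hp₁lt : p₁ < 1) (hp₂pos : 0 < p₂) (hp₂lt : p₂ < 1)
    (hsum : p₁ + p₂ = 1)
    (u : ℕ → Ω → ℕ) (hmeas : ∀ x : ℕ, Measurable (u x))
    (hindep : iIndepFun (fun n : ℕ => u (n + 1)) μ)
    (hdist1 : ∀ x : ℕ, 1 ≤ x → μ {ω | u x ω = 1} = p₁)
    (hdist2 : ∀ x : ℕ, 1 ≤ x → μ {ω | u x ω = 2} = p₂)
    (U : Ω → ℕ → ℕ) (hU : ∀ ω : Ω, ∀ x : ℕ, U ω x = ∑ i ∈ Finset.Icc 1 x, u i ω)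
    (V : Ω → ℕ → ℕ) (hV : ∀ ω : Ω, ∀ x : ℕ, V ω x = sInf {y : ℕ | x ≤ U ω y})
    (v : ℕ → Ω → ℕ) (hv : ∀ x : ℕ, 1 ≤ x → ∀ ω : Ω, v x ω = V ω x - V ω (x - 1)) :
    μ {ω | v 1 ω = 1} = 1 ∧
    μ {ω | v 2 ω = 0 ∧ v 3 ω = 1} = p₂ ∧
    μ {ω | v 2 ω = 1 ∧ v 3 ω = 0} = p₁ * p₂ ∧
    μ {ω | v 2 ω = 1 ∧ v 3 ω = 1} = p₁ ^ 2 ∧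
    ¬ IndepFun (v 2) (v 3) μ := by
  -- values of U
  have hU0 : ∀ ω, U ω 0 = 0 := fun ω => by simp [hU]
  have hU1 : ∀ ω, U ω 1 = u 1 ω := fun ω => by simp [hU]
  have hU2 : ∀ ω, U ω 2 = u 1 ω + u 2 ω := fun ω => by
    rw [hU, show Finset.Icc 1 2 = {1, 2} from rfl]
    simp
  have hU3 : ∀ ω, U ω 3 = u 1 ω + u 2 ω + u 3 ω := fun ω => by
    rw [hU, show Finset.Icc 1 3 = {1, 2, 3} from rfl]
    simp [add_assoc]
  -- values of V
  have hV0 : ∀ ω, V ω 0 = 0 := fun ω => by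
    rw [hV]
    exact natInf_eq_of_min (by simp) (by omega)
  have hV1 : ∀ ω, 1 ≤ u 1 ω → V ω 1 = 1 := by
    intro ω h
    rw [hV]
    refine natInf_eq_of_min ?_ ?_
    · show 1 ≤ U ω 1
      rw [hU1]; exact h
    · intro j hj hmem
      interval_cases j
      simp only [Set.mem_setOf_eq, hU0] at hmem
      omega
  have hV2a : ∀ ω, u 1 ω = 2 → V ω 2 = 1 := by
    intro ω h
    rw [hV]
    refine natInf_eq_of_min ?_ ?_
    · show 2 ≤ U ω 1
      rw [hU1, h]
    · intro j hj hmem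
      interval_cases j
      simp only [Set.mem_setOf_eq, hU0] at hmem
      omega
  have hV2b : ∀ ω, u 1 ω = 1 → 1 ≤ u 2 ω → V ω 2 = 2 := by
    intro ω h1 h2
    rw [hV]
    refine natInf_eq_of_min ?_ ?_
    · show 2 ≤ U ω 2
      rw [hU2, h1]; omega
    · intro j hj hmem
      interval_cases j
      · simp only [Set.mem_setOf_eq, hU0] at hmem; omega
      · simp only [Set.mem_setOf_eq, hU1, h1] at hmem; omega
  have hV3a : ∀ ω, u 1 ω = 2 → 1 ≤ u 2 ω → V ω 3 = 2 := by
    intro ω h1 h2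
    rw [hV]
    refine natInf_eq_of_min ?_ ?_
    · show 3 ≤ U ω 2
      rw [hU2, h1]; omega
    · intro j hj hmem
      interval_cases j
      · simp only [Set.mem_setOf_eq, hU0] at hmem; omega
      · simp only [Set.mem_setOf_eq, hU1, h1] at hmem; omega
  have hV3b : ∀ ω, u 1 ω = 1 → u 2 ω = 2 → V ω 3 = 2 := by
    intro ω h1 h2
    rw [hV]
    refine natInf_eq_of_min ?_ ?_
    · show 3 ≤ U ω 2
      rw [hU2, h1, h2]
    · intro j hj hmem
      interval_cases j
      · simp only [Set.mem_setOf_eq, hU0] at hmem; omega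
      · simp only [Set.mem_setOf_eq, hU1, h1] at hmem; omega
  have hV3c : ∀ ω, u 1 ω = 1 → u 2 ω = 1 → 1 ≤ u 3 ω → V ω 3 = 3 := by
    intro ω h1 h2 h3
    rw [hV]
    refine natInf_eq_of_min ?_ ?_
    · show 3 ≤ U ω 3
      rw [hU3, h1, h2]; omega
    · intro j hj hmem
      interval_cases j
      · simp only [Set.mem_setOf_eq, hU0] at hmem; omega
      · simp only [Set.mem_setOf_eq, hU1, h1] at hmem; omega
      · simp only [Set.mem_setOf_eq, hU2, h1, h2] at hmem; omega
  -- values of v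
  have hv1 : ∀ ω, 1 ≤ u 1 ω → v 1 ω = 1 := by
    intro ω h
    rw [hv 1 le_rfl ω, show (1:ℕ) - 1 = 0 from rfl, hV0, hV1 ω h]
  have hv2A : ∀ ω, u 1 ω = 2 → v 2 ω = 0 := by
    intro ω h
    rw [hv 2 (by norm_num) ω, show (2:ℕ) - 1 = 1 from rfl, hV2a ω h, hV1 ω (by omega)]
  have hv2B : ∀ ω, u 1 ω = 1 → 1 ≤ u 2 ω → v 2 ω = 1 := by
    intro ω h1 h2
    rw [hv 2 (by norm_num) ω, show (2:ℕ) - 1 = 1 from rfl, hV2b ω h1 h2, hV1 ω (by omega)]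
  have hv3A : ∀ ω, u 1 ω = 2 → 1 ≤ u 2 ω → v 3 ω = 1 := by
    intro ω h1 h2
    rw [hv 3 (by norm_num) ω, show (3:ℕ) - 1 = 2 from rfl, hV3a ω h1 h2, hV2a ω h1]
  have hv3B : ∀ ω, u 1 ω = 1 → u 2 ω = 2 → v 3 ω = 0 := by
    intro ω h1 h2
    rw [hv 3 (by norm_num) ω, show (3:ℕ) - 1 = 2 from rfl, hV3b ω h1 h2,
      hV2b ω h1 (by omega)]
  have hv3C : ∀ ω, u 1 ω = 1 → u 2 ω = 1 → 1 ≤ u 3 ω → v 3 ω = 1 := by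
    intro ω h1 h2 h3
    rw [hv 3 (by norm_num) ω, show (3:ℕ) - 1 = 2 from rfl, hV3c ω h1 h2 h3,
      hV2b ω h1 (by omega)]
  -- the good set
  set G : Set Ω := {ω | (u 1 ω = 1 ∨ u 1 ω = 2) ∧ (u 2 ω = 1 ∨ u 2 ω = 2) ∧
      (u 3 ω = 1 ∨ u 3 ω = 2)} with hGdef
  have hms : ∀ i k : ℕ, MeasurableSet {ω | u i ω = k} := fun i k =>
    hmeas i (measurableSet_singleton k)
  have hdisj : ∀ i : ℕ, Disjoint {ω | u i ω = 1} {ω | u i ω = 2} := by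
    intro i
    rw [Set.disjoint_left]
    intro ω h1 h2
    simp only [Set.mem_setOf_eq] at h1 h2
    omega
  have hone : ∀ i : ℕ, 1 ≤ i → μ {ω | u i ω = 1 ∨ u i ω = 2} = 1 := by
    intro i hi
    have : {ω | u i ω = 1 ∨ u i ω = 2} = {ω | u i ω = 1} ∪ {ω | u i ω = 2} := rfl
    rw [this, measure_union (hdisj i) (hms i 2), hdist1 i hi, hdist2 i hi, hsum]
  have hGc : μ Gᶜ = 0 := by
    have hsub : Gᶜ ⊆ {ω | u 1 ω = 1 ∨ u 1 ω = 2}ᶜ ∪ ({ω | u 2 ω = 1 ∨ u 2 ω = 2}ᶜ ∪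
        {ω | u 3 ω = 1 ∨ u 3 ω = 2}ᶜ) := by
      intro ω hω
      simp only [hGdef, Set.mem_compl_iff, Set.mem_setOf_eq, Set.mem_union] at hω ⊢
      tauto
    refine measure_mono_null hsub ?_
    have h1 : μ {ω | u 1 ω = 1 ∨ u 1 ω = 2}ᶜ = 0 :=
      (prob_compl_eq_zero_iff ((hms 1 1).union (hms 1 2))).mpr (hone 1 le_rfl)
    have h2 : μ {ω | u 2 ω = 1 ∨ u 2 ω = 2}ᶜ = 0 :=
      (prob_compl_eq_zero_iff ((hms 2 1).union (hms 2 2))).mpr (hone 2 (by norm_num))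
    have h3 : μ {ω | u 3 ω = 1 ∨ u 3 ω = 2}ᶜ = 0 :=
      (prob_compl_eq_zero_iff ((hms 3 1).union (hms 3 2))).mpr (hone 3 (by norm_num))
    exact measure_union_null h1 (measure_union_null h2 h3)
  have key : ∀ S : Set Ω, μ (S ∩ G) = μ S := by
    intro S
    refine le_antisymm (measure_mono Set.inter_subset_left) ?_
    have hsub : S ⊆ (S ∩ G) ∪ Gᶜ := by
      intro x hx
      by_cases h : x ∈ G
      · exact Or.inl ⟨hx, h⟩
      · exact Or.inr h
    calc μ S ≤ μ ((S ∩ G) ∪ Gᶜ) := measure_mono hsub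
      _ ≤ μ (S ∩ G) + μ Gᶜ := measure_union_le _ _
      _ = μ (S ∩ G) := by rw [hGc, add_zero]
  -- set identities
  have eq1 : {ω | v 1 ω = 1} ∩ G = G := by
    refine Set.inter_eq_right.mpr ?_
    rintro ω ⟨h1, _, _⟩
    exact hv1 ω (by omega)
  have eqA : {ω | v 2 ω = 0 ∧ v 3 ω = 1} ∩ G = {ω | u 1 ω = 2} ∩ G := by
    ext ω
    simp only [Set.mem_inter_iff, Set.mem_setOf_eq, hGdef]
    constructor
    · rintro ⟨⟨h2, h3⟩, hG⟩
      refine ⟨?_, hG⟩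
      obtain ⟨h1' | h1', h2', h3'⟩ := hG
      · have := hv2B ω h1' (by omega)
        omega
      · exact h1'
    · rintro ⟨h1, hG⟩
      obtain ⟨_, h2', _⟩ := id hG
      exact ⟨⟨hv2A ω h1, hv3A ω h1 (by omega)⟩, hG⟩
  have eqB : {ω | v 2 ω = 1 ∧ v 3 ω = 0} ∩ G = {ω | u 1 ω = 1 ∧ u 2 ω = 2} ∩ G := by
    ext ω
    simp only [Set.mem_inter_iff, Set.mem_setOf_eq, hGdef]
    constructor
    · rintro ⟨⟨h2, h3⟩, hG⟩
      refine ⟨?_, hG⟩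
      obtain ⟨h1' | h1', h2' | h2', h3'⟩ := hG
      · have := hv3C ω h1' h2' (by omega); omega
      · exact ⟨h1', h2'⟩
      · have := hv2A ω h1'; omega
      · have := hv2A ω h1'; omega
    · rintro ⟨⟨h1, h2⟩, hG⟩
      exact ⟨⟨hv2B ω h1 (by omega), hv3B ω h1 h2⟩, hG⟩
  have eqC : {ω | v 2 ω = 1 ∧ v 3 ω = 1} ∩ G = {ω | u 1 ω = 1 ∧ u 2 ω = 1} ∩ G := by
    ext ω
    simp only [Set.mem_inter_iff, Set.mem_setOf_eq, hGdef]
    constructor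
    · rintro ⟨⟨h2, h3⟩, hG⟩
      refine ⟨?_, hG⟩
      obtain ⟨h1' | h1', h2' | h2', h3'⟩ := hG
      · exact ⟨h1', h2'⟩
      · have := hv3B ω h1' h2'; omega
      · have := hv2A ω h1'; omega
      · have := hv2A ω h1'; omega
    · rintro ⟨⟨h1, h2⟩, hG⟩
      obtain ⟨_, _, h3'⟩ := id hG
      exact ⟨⟨hv2B ω h1 (by omega), hv3C ω h1 h2 (by omega)⟩, hG⟩
  have eqM2 : {ω | v 2 ω = 1} ∩ G = {ω | u 1 ω = 1} ∩ G := by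
    ext ω
    simp only [Set.mem_inter_iff, Set.mem_setOf_eq, hGdef]
    constructor
    · rintro ⟨h2, hG⟩
      refine ⟨?_, hG⟩
      obtain ⟨h1' | h1', h2', h3'⟩ := hG
      · exact h1'
      · have := hv2A ω h1'; omega
    · rintro ⟨h1, hG⟩
      obtain ⟨_, h2', _⟩ := id hG
      exact ⟨hv2B ω h1 (by omega), hG⟩
  have eqM3 : {ω | v 3 ω = 1} ∩ G =
      ({ω | u 1 ω = 2} ∪ {ω | u 1 ω = 1 ∧ u 2 ω = 1}) ∩ G := by
    ext ω
    simp only [Set.mem_inter_iff, Set.mem_union, Set.mem_setOf_eq, hGdef]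
    constructor
    · rintro ⟨h3, hG⟩
      refine ⟨?_, hG⟩
      obtain ⟨h1' | h1', h2' | h2', h3'⟩ := hG
      · exact Or.inr ⟨h1', h2'⟩
      · have := hv3B ω h1' h2'; omega
      · exact Or.inl h1'
      · exact Or.inl h1'
    · rintro ⟨h1, hG⟩
      obtain ⟨_, h2', h3'⟩ := id hG
      rcases h1 with h1 | ⟨h1, h2⟩
      · exact ⟨hv3A ω h1 (by omega), hG⟩
      · exact ⟨hv3C ω h1 h2 (by omega), hG⟩
  -- measures of u-events
  have indep12 : IndepFun (u 1) (u 2) μ := by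
    have := hindep.indepFun (show (0:ℕ) ≠ 1 by norm_num)
    simpa using this
  have hm11 : μ {ω | u 1 ω = 1 ∧ u 2 ω = 1} = p₁ * p₁ := by
    have h := indep12.measure_inter_preimage_eq_mul {1} {1}
      (measurableSet_singleton 1) (measurableSet_singleton 1)
    have he : u 1 ⁻¹' {1} ∩ u 2 ⁻¹' {1} = {ω | u 1 ω = 1 ∧ u 2 ω = 1} := by
      ext ω; simp [Set.mem_preimage]
    have he1 : u 1 ⁻¹' ({1} : Set ℕ) = {ω | u 1 ω = 1} := rfl
    have he2 : u 2 ⁻¹' ({1} : Set ℕ) = {ω | u 2 ω = 1} := rfl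
    rw [he, he1, he2, hdist1 1 le_rfl, hdist1 2 (by norm_num)] at h
    exact h
  have hm12 : μ {ω | u 1 ω = 1 ∧ u 2 ω = 2} = p₁ * p₂ := by
    have h := indep12.measure_inter_preimage_eq_mul {1} {2}
      (measurableSet_singleton 1) (measurableSet_singleton 2)
    have he : u 1 ⁻¹' {1} ∩ u 2 ⁻¹' {2} = {ω | u 1 ω = 1 ∧ u 2 ω = 2} := by
      ext ω; simp [Set.mem_preimage]
    have he1 : u 1 ⁻¹' ({1} : Set ℕ) = {ω | u 1 ω = 1} := rfl
    have he2 : u 2 ⁻¹' ({2} : Set ℕ) = {ω | u 2 ω = 2} := rfl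
    rw [he, he1, he2, hdist1 1 le_rfl, hdist2 2 (by norm_num)] at h
    exact h
  have hmG : μ G = 1 := by
    have := key Set.univ
    rw [Set.univ_inter, measure_univ] at this
    exact this
  -- the four probability claims
  have c1 : μ {ω | v 1 ω = 1} = 1 := by
    rw [← key {ω | v 1 ω = 1}, eq1, hmG]
  have c2 : μ {ω | v 2 ω = 0 ∧ v 3 ω = 1} = p₂ := by
    rw [← key _, eqA, key _, hdist2 1 le_rfl]
  have c3 : μ {ω | v 2 ω = 1 ∧ v 3 ω = 0} = p₁ * p₂ := by
    rw [← key _, eqB, key _, hm12]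
  have c4 : μ {ω | v 2 ω = 1 ∧ v 3 ω = 1} = p₁ ^ 2 := by
    rw [← key _, eqC, key _, hm11, sq]
  refine ⟨c1, c2, c3, c4, ?_⟩
  -- non-independence
  intro hIndep
  have hmv2 : μ {ω | v 2 ω = 1} = p₁ := by
    rw [← key _, eqM2, key _, hdist1 1 le_rfl]
  have hmv3 : μ {ω | v 3 ω = 1} = p₂ + p₁ * p₁ := by
    rw [← key _, eqM3, key _]
    have hdisj' : Disjoint {ω | u 1 ω = 2} {ω | u 1 ω = 1 ∧ u 2 ω = 1} := by
      rw [Set.disjoint_left]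
      intro ω h1 h2
      simp only [Set.mem_setOf_eq] at h1 h2
      omega
    have hm' : MeasurableSet {ω | u 1 ω = 1 ∧ u 2 ω = 1} := by
      have : {ω | u 1 ω = 1 ∧ u 2 ω = 1} = {ω | u 1 ω = 1} ∩ {ω | u 2 ω = 1} := rfl
      rw [this]
      exact (hms 1 1).inter (hms 2 1)
    rw [measure_union hdisj' hm', hdist2 1 le_rfl, hm11]
  have hE := hIndep.measure_inter_preimage_eq_mul {1} {1}
    (measurableSet_singleton 1) (measurableSet_singleton 1)
  have he : v 2 ⁻¹' {1} ∩ v 3 ⁻¹' {1} = {ω | v 2 ω = 1 ∧ v 3 ω = 1} := by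
    ext ω; simp [Set.mem_preimage]
  have he2 : v 2 ⁻¹' ({1} : Set ℕ) = {ω | v 2 ω = 1} := rfl
  have he3 : v 3 ⁻¹' ({1} : Set ℕ) = {ω | v 3 ω = 1} := rfl
  rw [he, he2, he3, c4, hmv2, hmv3, sq] at hE
  -- now hE : p₁ * p₁ = p₁ * (p₂ + p₁ * p₁), derive contradiction in ℝ
  have hp₁top : p₁ ≠ ⊤ := (hp₁lt.trans ENNReal.one_lt_top).ne
  have hp₂top : p₂ ≠ ⊤ := (hp₂lt.trans ENNReal.one_lt_top).ne
  have hmtop : p₁ * p₁ ≠ ⊤ := ENNReal.mul_ne_top hp₁top hp₁top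
  set a := p₁.toReal with ha
  set b := p₂.toReal with hb
  have hapos : 0 < a := ENNReal.toReal_pos hp₁pos.ne' hp₁top
  have hbpos : 0 < b := ENNReal.toReal_pos hp₂pos.ne' hp₂top
  have halt : a < 1 := by
    have := (ENNReal.toReal_lt_toReal hp₁top ENNReal.one_ne_top).mpr hp₁lt
    simpa using this
  have hsumR : a + b = 1 := by
    have := congrArg ENNReal.toReal hsum
    rwa [ENNReal.toReal_add hp₁top hp₂top, ENNReal.toReal_one] at this
  have hER : a * a = a * (b + a * a) := by
    have := congrArg ENNReal.toReal hE
    simpa [ENNReal.toReal_mul, ENNReal.toReal_add hp₂top hmtop] using this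
  nlinarith [mul_pos hapos (mul_pos (sub_pos.mpr halt) (sub_pos.mpr halt))]
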